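/- Let S be a numerical semigroup with m(S) − ν(S) ≥ 2. Then ⌊w_{ν+1}/m⌋ ≥ ⌊w_1/m⌋ + ⌊w_2/m⌋, where m = m(S) and ν = ν(S). -/

import Mathlib

/-- A numerical semigroup: an additive submonoid of `ℕ` (containing `0`, closed under
addition) whose complement in `ℕ` is finite. -/
structure NumericalSemigroup where
  carrier : Set ℕ
  zero_mem : 0 ∈ carrier
  add_mem : ∀ ⦃a b : ℕ⦄, a ∈ carrier → b ∈ carrier → a + b ∈ carrier
  cofinite : (carrierᶜ : Set ℕ).Finite

namespace NumericalSemigroup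

/-- The multiplicity `m(S)`: the smallest positive element of `S`. -/
noncomputable def mult (S : NumericalSemigroup) : ℕ :=
  sInf {s : ℕ | s ∈ S.carrier ∧ 0 < s}

/-- The embedding dimension `ν(S)`: the cardinality of the (unique) minimal system of
generators of `S`, i.e. the least cardinality of a generating set. -/
noncomputable def embdim (S : NumericalSemigroup) : ℕ :=
  sInf {n : ℕ | ∃ G : Finset ℕ,
    S.carrier = (AddSubmonoid.closure (G : Set ℕ) : Set ℕ) ∧ G.card = n}

/-- The Frobenius number `f(S)`: the largest integer not belonging to `S`. -/
noncomputable def frob (S : NumericalSemigroup) : ℤ :=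
  sSup {x : ℤ | ∀ s ∈ S.carrier, (s : ℤ) ≠ x}

/-- `n(S)`: the number of elements of `S` smaller than the Frobenius number. -/
noncomputable def small (S : NumericalSemigroup) : ℕ :=
  {s : ℕ | s ∈ S.carrier ∧ (s : ℤ) < S.frob}.ncard

/-- The type `t(S)`: the number of pseudo-Frobenius numbers of `S`, i.e. integers
`x ∉ S` such that `x + s ∈ S` for every nonzero `s ∈ S`. -/
noncomputable def typ (S : NumericalSemigroup) : ℕ :=
  {x : ℤ | (∀ s ∈ S.carrier, (s : ℤ) ≠ x) ∧
    ∀ s ∈ S.carrier, 0 < s → ∃ u ∈ S.carrier, (u : ℤ) = x + s}.ncard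

/-- The `k`-th interval `I_k = [k·m, (k+1)·m - 1]` (for a given `m`). -/
def interval (m k : ℕ) : Set ℕ := Set.Ico (k * m) ((k + 1) * m)

/-- `n_k`: the number of elements of `S ∩ I_k` smaller than the Frobenius number. -/
noncomputable def nk (S : NumericalSemigroup) (k : ℕ) : ℕ :=
  {s : ℕ | s ∈ S.carrier ∩ interval S.mult k ∧ (s : ℤ) < S.frob}.ncard

/-- `L = ⌊f(S)/m(S)⌋`. -/
noncomputable def Lindex (S : NumericalSemigroup) : ℤ := S.frob / (S.mult : ℤ)

/-- `ρ = f(S) + 1 - L·m(S)`. -/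
noncomputable def rho (S : NumericalSemigroup) : ℤ :=
  S.frob + 1 - S.Lindex * (S.mult : ℤ)

/-- The Apéry set `Ap(S) = {w ∈ S : w - m(S) ∉ S}`. -/
def apery (S : NumericalSemigroup) : Set ℕ :=
  {w : ℕ | w ∈ S.carrier ∧ ∀ u ∈ S.carrier, u + S.mult ≠ w}

theorem apery_finite (S : NumericalSemigroup) : S.apery.Finite := by
  apply Set.Finite.subset ((Set.finite_Iio S.mult).union (S.cofinite.image (· + S.mult)))
  intro x hx
  by_cases h : x < S.mult
  · exact Or.inl h
  · refine Or.inr ⟨x - S.mult, fun hmem => hx.2 _ hmem (by omega), ?_⟩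
    show x - S.mult + S.mult = x
    omega

/-- `w j`: the `(j+1)`-st smallest element of the Apéry set, so that
`Ap(S) = {w 0 < w 1 < ... < w (m-1)}` with `w 0 = 0`. -/
noncomputable def w (S : NumericalSemigroup) (j : ℕ) : ℕ :=
  (S.apery_finite.toFinset.sort (· ≤ ·)).getD j 0

/-- `ε_j`: the number of `k ∈ {0, ..., L-1}` such that `|I_k ∩ S| = j`. -/
noncomputable def eps (S : NumericalSemigroup) (j : ℕ) : ℕ :=
  {k : ℕ | (k : ℤ) < S.Lindex ∧ (S.carrier ∩ interval S.mult k).ncard = j}.ncard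

/-- `η_j`: the number of `k ∈ ℕ` such that `|I_k ∩ S| = j`. -/
noncomputable def eta (S : NumericalSemigroup) (j : ℕ) : ℕ :=
  {k : ℕ | (S.carrier ∩ interval S.mult k).ncard = j}.ncard

-- AUX START
lemma exists_bound (S : NumericalSemigroup) : ∃ N, ∀ n, N ≤ n → n ∈ S.carrier := by
  obtain ⟨N, hN⟩ := S.cofinite.bddAbove
  refine ⟨N + 1, fun n hn => ?_⟩
  by_contra hc
  exact absurd (hN hc) (by omega)

lemma mult_spec (S : NumericalSemigroup) : S.mult ∈ S.carrier ∧ 0 < S.mult := by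
  have hne : {s : ℕ | s ∈ S.carrier ∧ 0 < s}.Nonempty := by
    obtain ⟨N, hN⟩ := S.exists_bound
    exact ⟨N + 1, hN _ (by omega), by omega⟩
  exact Nat.sInf_mem hne

lemma le_card_apery (S : NumericalSemigroup) : S.mult ≤ S.apery_finite.toFinset.card := by
  classical
  obtain ⟨hmS, hm⟩ := S.mult_spec
  set m := S.mult with hmdef
  set f : ℕ → ℕ := fun r => sInf {x | x ∈ S.carrier ∧ x % m = r} with hf
  have hne : ∀ r < m, {x | x ∈ S.carrier ∧ x % m = r}.Nonempty := by
    intro r hr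
    obtain ⟨N, hN⟩ := S.exists_bound
    refine ⟨r + (N + 1) * m, hN _ (by nlinarith), ?_⟩
    simp [Nat.add_mul_mod_self_right, Nat.mod_eq_of_lt hr]
  have hfmem : ∀ r < m, f r ∈ S.carrier ∧ f r % m = r := fun r hr => Nat.sInf_mem (hne r hr)
  have hfap : ∀ r < m, f r ∈ S.apery := by
    intro r hr
    refine ⟨(hfmem r hr).1, fun u hu hum => ?_⟩
    have hur : u % m = r := by
      have h1 : u % m = (u + m) % m := (Nat.add_mod_right u m).symm
      rw [h1, hum]; exact (hfmem r hr).2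
    have hle : f r ≤ u := Nat.sInf_le ⟨hu, hur⟩
    omega
  have : (Finset.range m).card ≤ S.apery_finite.toFinset.card := by
    refine Finset.card_le_card_of_injOn f (fun r hr => ?_) (fun r hr s hs hrs => ?_)
    · rw [Finset.mem_coe, Set.Finite.mem_toFinset]
      exact hfap r (Finset.mem_range.mp hr)
    · have h1 := (hfmem r (Finset.mem_range.mp hr)).2
      have h2 := (hfmem s (Finset.mem_range.mp hs)).2
      rw [← h1, ← h2, hrs]
  simpa using this

lemma w_mem_apery (S : NumericalSemigroup) {j : ℕ} (hj : j < S.apery_finite.toFinset.card) :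
    S.w j ∈ S.apery := by
  classical
  have hlen : j < (S.apery_finite.toFinset.sort (· ≤ ·)).length := by
    rwa [Finset.length_sort]
  rw [w, List.getD_eq_getElem _ _ hlen]
  have := List.getElem_mem hlen
  rwa [Finset.mem_sort, Set.Finite.mem_toFinset] at this

lemma w_lt_w (S : NumericalSemigroup) {i j : ℕ} (hij : i < j)
    (hj : j < S.apery_finite.toFinset.card) : S.w i < S.w j := by
  classical
  have hlenj : j < (S.apery_finite.toFinset.sort (· ≤ ·)).length := by
    rwa [Finset.length_sort]
  have hleni : i < (S.apery_finite.toFinset.sort (· ≤ ·)).length := lt_trans (by omega) hlenj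
  rw [w, w, List.getD_eq_getElem _ _ hleni, List.getD_eq_getElem _ _ hlenj]
  exact List.pairwise_iff_getElem.mp (S.apery_finite.toFinset.sortedLT_sort).pairwise i j hleni hlenj hij

lemma w_zero (S : NumericalSemigroup) (h0 : 0 < S.apery_finite.toFinset.card) : S.w 0 = 0 := by
  classical
  have h0ap : (0 : ℕ) ∈ S.apery :=
    ⟨S.zero_mem, fun u hu hum => by have := S.mult_spec.2; omega⟩
  have h0l : (0 : ℕ) ∈ S.apery_finite.toFinset.sort (· ≤ ·) := by
    rw [Finset.mem_sort, Set.Finite.mem_toFinset]; exact h0ap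
  obtain ⟨k, hk, hk0⟩ := List.getElem_of_mem h0l
  have hlen : 0 < (S.apery_finite.toFinset.sort (· ≤ ·)).length := by
    rwa [Finset.length_sort]
  rw [w, List.getD_eq_getElem _ _ hlen]
  rcases Nat.eq_zero_or_pos k with rfl | hkpos
  · exact hk0
  · have := List.pairwise_iff_getElem.mp (S.apery_finite.toFinset.sortedLT_sort).pairwise 0 k hlen hk hkpos
    omega

lemma w_index_le (S : NumericalSemigroup) {a i : ℕ} (ha : a ∈ S.apery)
    (hlow : ∀ j < i, S.w j ≠ a) (hi : i < S.apery_finite.toFinset.card) : S.w i ≤ a := by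
  classical
  have hal : a ∈ S.apery_finite.toFinset.sort (· ≤ ·) := by
    rw [Finset.mem_sort, Set.Finite.mem_toFinset]; exact ha
  obtain ⟨k, hk, hka⟩ := List.getElem_of_mem hal
  have hwk : S.w k = a := by rw [w, List.getD_eq_getElem _ _ hk]; exact hka
  have hik : i ≤ k := by
    by_contra hc
    exact hlow k (by omega) hwk
  rcases Nat.eq_or_lt_of_le hik with rfl | hlt
  · exact hwk.le
  · have := S.w_lt_w hlt (by rwa [Finset.length_sort] at hk)
    omega

def IsIrr (S : NumericalSemigroup) (g : ℕ) : Prop :=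
  g ∈ S.carrier ∧ g ≠ 0 ∧
    ¬∃ a b, a ∈ S.carrier ∧ b ∈ S.carrier ∧ a ≠ 0 ∧ b ≠ 0 ∧ a + b = g

lemma mult_isIrr (S : NumericalSemigroup) : S.IsIrr S.mult := by
  obtain ⟨hmS, hm⟩ := S.mult_spec
  refine ⟨hmS, by omega, ?_⟩
  rintro ⟨a, b, ha, hb, ha0, hb0, hab⟩
  have h1 : S.mult ≤ a := Nat.sInf_le ⟨ha, by omega⟩
  have h2 : S.mult ≤ b := Nat.sInf_le ⟨hb, by omega⟩
  omega

lemma mult_not_mem_apery (S : NumericalSemigroup) : S.mult ∉ S.apery := by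
  rintro ⟨_, h⟩
  exact h 0 S.zero_mem (zero_add _)

def toM (S : NumericalSemigroup) : AddSubmonoid ℕ where
  carrier := S.carrier
  zero_mem' := S.zero_mem
  add_mem' := fun h1 h2 => S.add_mem h1 h2

lemma exists_gen (S : NumericalSemigroup) :
    {n : ℕ | ∃ G : Finset ℕ,
      S.carrier = (AddSubmonoid.closure (G : Set ℕ) : Set ℕ) ∧ G.card = n}.Nonempty := by
  classical
  set G : Finset ℕ := insert S.mult S.apery_finite.toFinset with hG
  refine ⟨G.card, G, ?_, rfl⟩
  apply Set.Subset.antisymm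
  · intro s hs
    induction s using Nat.strong_induction_on with
    | _ s ih =>
      by_cases hap : s ∈ S.apery
      · exact AddSubmonoid.subset_closure (by
          simp only [hG, Finset.coe_insert, Set.mem_insert_iff, Set.Finite.coe_toFinset]
          exact Or.inr hap)
      · have : ∃ u ∈ S.carrier, u + S.mult = s := by
          by_contra hc
          push_neg at hc
          exact hap ⟨hs, hc⟩
        obtain ⟨u, hu, hus⟩ := this
        have hm := S.mult_spec.2
        have h1 : (u : ℕ) ∈ (AddSubmonoid.closure (G : Set ℕ) : Set ℕ) :=
          ih u (by omega) hu
        have h2 : (S.mult : ℕ) ∈ (AddSubmonoid.closure (G : Set ℕ) : Set ℕ) :=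
          AddSubmonoid.subset_closure (by simp [hG])
        rw [← hus]
        exact AddSubmonoid.add_mem _ h1 h2
  · have : AddSubmonoid.closure (G : Set ℕ) ≤ S.toM := by
      apply AddSubmonoid.closure_le.mpr
      intro x hx
      simp only [hG, Finset.coe_insert, Set.mem_insert_iff, Set.Finite.coe_toFinset] at hx
      rcases hx with rfl | hx
      · exact S.mult_spec.1
      · exact hx.1
    exact this

lemma irr_mem_gen (S : NumericalSemigroup) {G : Finset ℕ}
    (hG : S.carrier = (AddSubmonoid.closure (G : Set ℕ) : Set ℕ)) {g : ℕ}
    (hg : S.IsIrr g) : g ∈ G := by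
  have hmem : g ∈ AddSubmonoid.closure (G : Set ℕ) := by
    have := hg.1; rw [hG] at this; exact this
  have key : ∀ x (hx : x ∈ AddSubmonoid.closure (G : Set ℕ)),
      x ∈ S.carrier ∧ (x ≠ 0 → x ∈ G ∨
        ∃ a b, a ∈ S.carrier ∧ b ∈ S.carrier ∧ a ≠ 0 ∧ b ≠ 0 ∧ a + b = x) := by
    intro x hx
    induction hx using AddSubmonoid.closure_induction with
    | mem y hy =>
      refine ⟨?_, fun _ => Or.inl hy⟩
      rw [hG]; exact AddSubmonoid.subset_closure hy
    | zero => exact ⟨S.zero_mem, fun h => absurd rfl h⟩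
    | add x y hx hy ihx ihy =>
      refine ⟨S.add_mem ihx.1 ihy.1, fun hxy => ?_⟩
      rcases Nat.eq_zero_or_pos x with rfl | hx0
      · simpa using ihy.2 (by omega)
      rcases Nat.eq_zero_or_pos y with rfl | hy0
      · simpa using ihx.2 (by omega)
      · exact Or.inr ⟨x, y, ihx.1, ihy.1, by omega, by omega, rfl⟩
  obtain ⟨_, h2⟩ := key g hmem
  rcases h2 hg.2.1 with h | h
  · exact h
  · exact absurd h hg.2.2

lemma apery_summand_left (S : NumericalSemigroup) {x a b : ℕ} (hx : x ∈ S.apery)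
    (ha : a ∈ S.carrier) (hb : b ∈ S.carrier) (hab : a + b = x) : a ∈ S.apery :=
  ⟨ha, fun u hu hum => hx.2 (u + b) (S.add_mem hu hb) (by omega)⟩
-- AUX END

/-- If `m(S) - ν(S) ≥ 2` then `⌊w_{ν+1}/m⌋ ≥ ⌊w_1/m⌋ + ⌊w_2/m⌋`. -/
theorem floor_w_succ_embdim (S : NumericalSemigroup)
    (h : 2 ≤ S.mult - S.embdim) :
    S.w (S.embdim + 1) / S.mult ≥ S.w 1 / S.mult + S.w 2 / S.mult := by
  classical
  obtain ⟨hmS, hm⟩ := S.mult_spec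
  obtain ⟨G, hG, hGcard⟩ := Nat.sInf_mem S.exists_gen
  have hGν : G.card = S.embdim := hGcard
  clear hGcard
  set ν := S.embdim with hν
  clear_value ν
  have hcard : S.mult ≤ S.apery_finite.toFinset.card := S.le_card_apery
  have hc : ν + 2 ≤ S.apery_finite.toFinset.card := by omega
  have hw0 : S.w 0 = 0 := S.w_zero (by omega)
  have hwap : ∀ i, 1 ≤ i → i ≤ ν + 1 → S.w i ∈ S.apery := fun i h1 h2 =>
    S.w_mem_apery (by omega)
  have hwpos : ∀ i, 1 ≤ i → i ≤ ν + 1 → 0 < S.w i := by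
    intro i h1 h2
    have := S.w_lt_w (show 0 < i by omega) (show i < _ by omega)
    omega
  have hwle : ∀ i, 1 ≤ i → i ≤ ν + 1 → S.w i ≤ S.w (ν + 1) := by
    intro i h1 h2
    rcases Nat.eq_or_lt_of_le h2 with rfl | hlt
    · exact le_refl _
    · exact (S.w_lt_w hlt (by omega)).le
  set T : Finset ℕ := (Finset.Icc 1 (ν + 1)).image S.w with hT
  have hinj : Set.InjOn S.w ((Finset.Icc 1 (ν + 1)) : Set ℕ) := by
    intro i hi j hj hij
    simp only [Finset.coe_Icc, Set.mem_Icc] at hi hj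
    by_contra hne
    rcases Nat.lt_or_ge i j with hlt | hge
    · have := S.w_lt_w hlt (show j < _ by omega); omega
    · have := S.w_lt_w (show j < i by omega) (show i < _ by omega); omega
  have hTcard : T.card = ν + 1 := by
    rw [hT, Finset.card_image_of_injOn hinj, Nat.card_Icc]
    omega
  have hmG : S.mult ∈ G := S.irr_mem_gen hG S.mult_isIrr
  have hsub : T.filter (fun x => S.IsIrr x) ⊆ G.erase S.mult := by
    intro x hx
    rw [Finset.mem_filter] at hx
    obtain ⟨hxT, hxirr⟩ := hx
    rw [hT, Finset.mem_image] at hxT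
    obtain ⟨i, hi, rfl⟩ := hxT
    rw [Finset.mem_Icc] at hi
    refine Finset.mem_erase.mpr ⟨?_, S.irr_mem_gen hG hxirr⟩
    intro heq
    exact S.mult_not_mem_apery (heq ▸ hwap i hi.1 hi.2)
  have hIrrcard : (T.filter (fun x => S.IsIrr x)).card ≤ ν - 1 := by
    have := Finset.card_le_card hsub
    rwa [Finset.card_erase_of_mem hmG, hGν] at this
  have hν1 : 1 ≤ ν := by
    have : 1 ≤ G.card := Finset.card_pos.mpr ⟨_, hmG⟩
    omega
  have hRcard : 2 ≤ (T.filter (fun x => ¬ S.IsIrr x)).card := by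
    have := Finset.card_filter_add_card_filter_not (s := T) (fun x => S.IsIrr x)
    omega
  obtain ⟨x, hx, y, hy, hxy⟩ := Finset.one_lt_card.mp (show 1 < (T.filter (fun x => ¬ S.IsIrr x)).card by omega)
  have hprop : ∀ z ∈ T.filter (fun x => ¬ S.IsIrr x),
      z ∈ S.apery ∧ 0 < z ∧ z ≤ S.w (ν + 1) ∧
      ∃ a b, a ∈ S.apery ∧ b ∈ S.apery ∧ a ≠ 0 ∧ b ≠ 0 ∧ a + b = z := by
    intro z hz
    rw [Finset.mem_filter] at hz
    obtain ⟨hzT, hznirr⟩ := hz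
    rw [hT, Finset.mem_image] at hzT
    obtain ⟨i, hi, rfl⟩ := hzT
    rw [Finset.mem_Icc] at hi
    have hzap := hwap i hi.1 hi.2
    have hzpos := hwpos i hi.1 hi.2
    refine ⟨hzap, hzpos, hwle i hi.1 hi.2, ?_⟩
    rw [IsIrr] at hznirr
    push_neg at hznirr
    obtain ⟨a, b, ha, hb, ha0, hb0, hab⟩ := hznirr hzap.1 (by omega)
    exact ⟨a, b, S.apery_summand_left hzap ha hb hab,
      S.apery_summand_left hzap hb ha (by omega), ha0, hb0, hab⟩
  have hw1le : ∀ a, a ∈ S.apery → a ≠ 0 → S.w 1 ≤ a := by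
    intro a ha ha0
    refine S.w_index_le ha ?_ (by omega)
    intro j hj
    have : j = 0 := by omega
    subst this
    rw [hw0]
    exact fun e => ha0 e.symm
  have hw2le : ∀ a, a ∈ S.apery → S.w 1 < a → S.w 2 ≤ a := by
    intro a ha h1
    have hw01 : S.w 0 < S.w 1 := S.w_lt_w (by omega) (by omega)
    refine S.w_index_le ha ?_ (by omega)
    intro j hj
    interval_cases j <;> omega
  have main : ∀ p q, p ∈ T.filter (fun x => ¬ S.IsIrr x) →
      q ∈ T.filter (fun x => ¬ S.IsIrr x) → p < q →
      S.w 1 + S.w 2 ≤ S.w (ν + 1) := by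
    intro p q hp hq hpq
    obtain ⟨hpap, hppos, hple, a, b, haap, hbap, ha0, hb0, hab⟩ := hprop p hp
    obtain ⟨hqap, hqpos, hqle, c, d, hcap, hdap, hc0, hd0, hcd⟩ := hprop q hq
    have hwa := hw1le a haap ha0
    have hwb := hw1le b hbap hb0
    have hwc := hw1le c hcap hc0
    have hwd := hw1le d hdap hd0
    have hcd' : S.w 1 < c ∨ S.w 1 < d := by omega
    rcases hcd' with hcc | hdd
    · have := hw2le c hcap hcc; omega
    · have := hw2le d hdap hdd; omega
  have hfin : S.w 1 + S.w 2 ≤ S.w (ν + 1) := by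
    rcases Nat.lt_or_ge x y with hlt | hge
    · exact main x y hx hy hlt
    · exact main y x hy hx (by omega)
  rw [ge_iff_le, Nat.le_div_iff_mul_le hm, add_mul]
  exact le_trans (Nat.add_le_add (Nat.div_mul_le_self _ _) (Nat.div_mul_le_self _ _)) hfin


end NumericalSemigroup
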